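/- arXiv:2310.10370 — 3 statements merged into one kernel-verified Lean document; each statement's English description precedes it below -/
import Mathlib

section
/- Let H be a Hilbert space, T and S unitary operators on H, J a bounded operator on H with T∘J = J∘S, and (n_j) a sequence of natural numbers such that T^{n_j} converges to the identity in the weak operator topology and S^{n_j} converges to 0 in the weak operator topology. Then J = 0. -/
open Filter Topology

theorem stmt_0 {H : Type*} [NormedAddCommGroup H] [InnerProductSpace ℂ H] [CompleteSpace H]
    (T S : unitary (H →L[ℂ] H)) (J : H →L[ℂ] H)
    (hJ : (T : H →L[ℂ] H) ∘L J = J ∘L (S : H →L[ℂ] H))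
    (n : ℕ → ℕ)
    (hT : ∀ x y : H, Tendsto (fun j => @inner ℂ _ _ (((T ^ (n j) : unitary (H →L[ℂ] H)) : H →L[ℂ] H) x) y) atTop (𝓝 (@inner ℂ _ _ x y)))
    (hS : ∀ x y : H, Tendsto (fun j => @inner ℂ _ _ (((S ^ (n j) : unitary (H →L[ℂ] H)) : H →L[ℂ] H) x) y) atTop (𝓝 0)) :
    J = 0 := by
  have hJ' : (T : H →L[ℂ] H) * J = J * (S : H →L[ℂ] H) := hJ
  have key : ∀ k : ℕ, ((T : H →L[ℂ] H) ^ k) * J = J * ((S : H →L[ℂ] H) ^ k) := by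
    intro k
    induction k with
    | zero => simp
    | succ k ih =>
      rw [pow_succ, pow_succ]
      calc (T : H →L[ℂ] H) ^ k * (T : H →L[ℂ] H) * J
          = (T : H →L[ℂ] H) ^ k * ((T : H →L[ℂ] H) * J) := mul_assoc _ _ _
        _ = (T : H →L[ℂ] H) ^ k * (J * (S : H →L[ℂ] H)) := by rw [hJ']
        _ = ((T : H →L[ℂ] H) ^ k * J) * (S : H →L[ℂ] H) := (mul_assoc _ _ _).symm
        _ = (J * (S : H →L[ℂ] H) ^ k) * (S : H →L[ℂ] H) := by rw [ih]
        _ = J * ((S : H →L[ℂ] H) ^ k * (S : H →L[ℂ] H)) := mul_assoc _ _ _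
  have hinner : ∀ x y : H, (inner ℂ (J x) y : ℂ) = 0 := by
    intro x y
    have h1 : Tendsto (fun j => (inner ℂ (((T ^ (n j) : unitary (H →L[ℂ] H)) : H →L[ℂ] H) (J x)) y : ℂ))
        atTop (𝓝 (inner ℂ (J x) y)) := hT (J x) y
    have h2 : ∀ j, (inner ℂ (((T ^ (n j) : unitary (H →L[ℂ] H)) : H →L[ℂ] H) (J x)) y : ℂ)
        = inner ℂ (((S ^ (n j) : unitary (H →L[ℂ] H)) : H →L[ℂ] H) x) ((ContinuousLinearMap.adjoint J) y) := by
      intro j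
      have hc : ((T ^ (n j) : unitary (H →L[ℂ] H)) : H →L[ℂ] H) (J x)
          = J (((S ^ (n j) : unitary (H →L[ℂ] H)) : H →L[ℂ] H) x) := by
        have := congrArg (fun A : H →L[ℂ] H => A x) (key (n j))
        simpa [ContinuousLinearMap.mul_apply] using this
      rw [hc, ← ContinuousLinearMap.adjoint_inner_right]
    have h3 : Tendsto (fun j => (inner ℂ (((T ^ (n j) : unitary (H →L[ℂ] H)) : H →L[ℂ] H) (J x)) y : ℂ))
        atTop (𝓝 0) := by
      simpa only [h2] using hS x ((ContinuousLinearMap.adjoint J) y)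
    exact tendsto_nhds_unique h1 h3
  ext x
  have := hinner x (J x)
  simpa [inner_self_eq_zero] using this
end

section
/- Let S be an invertible measure-preserving transformation of a σ-finite measure space (X, μ) and let W be a wandering set for S (the sets S^i W, i ∈ ℤ, are pairwise disjoint) such that X = ⋃_{i ∈ ℤ} S^i W up to null sets. Then for every measurable set Y with μ(Y) < ∞, limsup_{N→∞} μ(S^{N+1} Y \ ⋃_{i=1}^{N} S^i Y) ≤ μ(W). -/
open Filter MeasureTheory Topology

theorem stmt_14 {X : Type*} [MeasurableSpace X] (μ : Measure X) [SigmaFinite μ]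
    (S : Equiv.Perm X) (hS : MeasurePreserving S μ μ) (hS' : MeasurePreserving S.symm μ μ)
    (W : Set X) (hW : MeasurableSet W)
    (hwand : Pairwise (Function.onFun Disjoint fun i : ℤ => (S ^ i : Equiv.Perm X) '' W))
    (hcover : μ ((⋃ i : ℤ, (S ^ i : Equiv.Perm X) '' W)ᶜ) = 0)
    (Y : Set X) (hY : MeasurableSet Y) (hYfin : μ Y < ⊤) :
    Filter.limsup (fun N : ℕ =>
        μ ((S ^ (N + 1) : Equiv.Perm X) '' Y \ ⋃ i ∈ Finset.Icc 1 N, (S ^ i : Equiv.Perm X) '' Y))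
      atTop ≤ μ W := by
  -- all integer powers of S are measure preserving
  have hmp : ∀ k : ℤ, MeasurePreserving ⇑(S ^ k : Equiv.Perm X) μ μ := by
    intro k
    induction k using Int.induction_on with
    | zero => simpa using MeasurePreserving.id μ
    | succ n ih =>
        rw [zpow_add_one]
        simpa [Equiv.Perm.coe_mul] using ih.comp hS
    | pred n ih =>
        rw [zpow_sub_one]
        have : (S⁻¹ : Equiv.Perm X) = S.symm := rfl
        simpa [Equiv.Perm.coe_mul, this] using ih.comp hS'
  have hsymm : ∀ k : ℤ, ⇑((S ^ k : Equiv.Perm X).symm) = ⇑(S ^ (-k) : Equiv.Perm X) := by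
    intro k
    rw [zpow_neg]
    rfl
  have himg : ∀ (k : ℤ) (Z : Set X), MeasurableSet Z →
      μ ((S ^ k : Equiv.Perm X) '' Z) = μ Z := by
    intro k Z hZ
    rw [Equiv.image_eq_preimage_symm, hsymm]
    exact (hmp (-k)).measure_preimage hZ.nullMeasurableSet
  have hms : ∀ (k : ℤ) (Z : Set X), MeasurableSet Z →
      MeasurableSet ((S ^ k : Equiv.Perm X) '' Z) := by
    intro k Z hZ
    rw [Equiv.image_eq_preimage_symm, hsymm]
    exact (hmp (-k)).measurable hZ
  have hcomp : ∀ (a b : ℤ) (Z : Set X),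
      (S ^ a : Equiv.Perm X) '' ((S ^ b : Equiv.Perm X) '' Z)
        = (S ^ (a + b) : Equiv.Perm X) '' Z := by
    intro a b Z
    rw [← Set.image_comp, ← Equiv.Perm.coe_mul, ← zpow_add]
  have happ : ∀ (a b : ℤ) (x : X),
      (S ^ a : Equiv.Perm X) ((S ^ b : Equiv.Perm X) x) = (S ^ (a + b) : Equiv.Perm X) x := by
    intro a b x
    rw [← Equiv.Perm.mul_apply, ← zpow_add]
  -- the decreasing sets E N
  set E : ℕ → Set X := fun N => Y \ ⋃ j ∈ Finset.Icc 1 N, (S ^ (-(j : ℤ)) : Equiv.Perm X) '' Y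
    with hE
  have hEmeas : ∀ N, MeasurableSet (E N) := by
    intro N
    exact hY.diff (MeasurableSet.biUnion (Finset.countable_toSet _)
      (fun j _ => hms _ _ hY))
  have hEanti : Antitone E := by
    intro n m hnm
    refine Set.diff_subset_diff_right ?_
    exact Set.biUnion_subset_biUnion_left (by simpa using (Set.Icc_subset_Icc_right hnm : Set.Icc 1 n ⊆ Set.Icc 1 m))
  -- key identity: the sets in the statement have the same measure as E N
  have key : ∀ N : ℕ,
      μ ((S ^ (N + 1) : Equiv.Perm X) '' Y \ ⋃ i ∈ Finset.Icc 1 N, (S ^ i : Equiv.Perm X) '' Y)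
        = μ (E N) := by
    intro N
    have hnat : ∀ n : ℕ, (S ^ n : Equiv.Perm X) = (S ^ (n : ℤ) : Equiv.Perm X) := by
      intro n; rw [zpow_natCast]
    have hmeasD : MeasurableSet
        ((S ^ (N + 1) : Equiv.Perm X) '' Y \ ⋃ i ∈ Finset.Icc 1 N, (S ^ i : Equiv.Perm X) '' Y) := by
      refine MeasurableSet.diff ?_ (MeasurableSet.biUnion (Finset.countable_toSet _) fun i _ => ?_)
      · rw [hnat]; exact hms _ _ hY
      · rw [hnat]; exact hms _ _ hY
    rw [← himg (-((N : ℤ) + 1)) _ hmeasD]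
    congr 1
    rw [Set.image_diff (Equiv.injective _)]
    congr 1
    · rw [hnat, hcomp, show (-((N : ℤ) + 1) + ((N + 1 : ℕ) : ℤ)) = 0 by push_cast; ring,
        zpow_zero]
      simp
    · rw [Set.image_iUnion₂]
      ext x
      simp only [Set.mem_iUnion, Finset.mem_Icc, exists_prop]
      constructor
      · rintro ⟨i, ⟨h1, h2⟩, hx⟩
        refine ⟨N + 1 - i, ⟨by omega, by omega⟩, ?_⟩
        rw [hnat i, hcomp] at hx
        have hco : (-((N + 1 - i : ℕ) : ℤ)) = -((N : ℤ) + 1) + (i : ℤ) := by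
          rw [Nat.cast_sub (by omega)]; push_cast; ring
        rw [hco]; exact hx
      · rintro ⟨j, ⟨h1, h2⟩, hx⟩
        refine ⟨N + 1 - j, ⟨by omega, by omega⟩, ?_⟩
        rw [hnat (N + 1 - j), hcomp]
        have hco : (-((j : ℕ) : ℤ)) = -((N : ℤ) + 1) + ((N + 1 - j : ℕ) : ℤ) := by
          rw [Nat.cast_sub (by omega)]; push_cast; ring
        rw [← hco]; exact hx
  -- limit of μ (E N)
  have htend : Tendsto (μ ∘ E) atTop (𝓝 (μ (⋂ n, E n))) :=
    tendsto_measure_iInter_atTop (fun n => (hEmeas n).nullMeasurableSet) hEanti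
      ⟨0, by exact (lt_of_le_of_lt (measure_mono Set.diff_subset) hYfin).ne⟩
  have hlimsup : Filter.limsup (fun N : ℕ =>
      μ ((S ^ (N + 1) : Equiv.Perm X) '' Y \ ⋃ i ∈ Finset.Icc 1 N, (S ^ i : Equiv.Perm X) '' Y))
        atTop = μ (⋂ n, E n) := by
    have : (fun N : ℕ =>
        μ ((S ^ (N + 1) : Equiv.Perm X) '' Y \ ⋃ i ∈ Finset.Icc 1 N, (S ^ i : Equiv.Perm X) '' Y))
        = μ ∘ E := by
      funext N; exact key N
    rw [this, htend.limsup_eq]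
  rw [hlimsup]
  -- properties of A = ⋂ E N
  set A : Set X := ⋂ n, E n with hAdef
  have hAmeas : MeasurableSet A := MeasurableSet.iInter hEmeas
  have hAY : A ⊆ Y := (Set.iInter_subset E 0).trans Set.diff_subset
  have hAnot : ∀ d : ℤ, 1 ≤ d → ∀ x ∈ A, x ∉ (S ^ (-d) : Equiv.Perm X) '' Y := by
    intro d hd x hxA hxim
    have hx : x ∈ E d.toNat := Set.mem_iInter.1 hxA d.toNat
    refine hx.2 (Set.mem_biUnion (?_ : d.toNat ∈ Finset.Icc 1 d.toNat) ?_)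
    · simp only [Finset.mem_Icc]; omega
    · have : ((d.toNat : ℤ)) = d := Int.toNat_of_nonneg (by omega)
      rw [this]; exact hxim
  -- A is wandering
  have hAw : ∀ i k : ℤ, i ≠ k →
      Disjoint ((S ^ i : Equiv.Perm X) '' A) ((S ^ k : Equiv.Perm X) '' A) := by
    intro i k hik
    rw [Set.disjoint_left]
    rintro x ⟨a, ha, rfl⟩ ⟨b, hb, hab⟩
    -- (S^i) a = (S^k) b
    have hba : a = (S ^ (k - i) : Equiv.Perm X) b := by
      have := congrArg (⇑(S ^ (-i) : Equiv.Perm X)) hab.symm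
      rwa [happ, happ, neg_add_cancel, zpow_zero, Equiv.Perm.coe_one, id_eq,
        show -i + k = k - i by ring] at this
    rcases lt_or_gt_of_ne hik with h | h
    · -- i < k : then b = S^(i-k) a, i-k ≤ -1
      have hab' : b = (S ^ (i - k) : Equiv.Perm X) a := by
        rw [hba, happ]
        simp
      exact hAnot (k - i) (by omega) b hb
        ⟨a, hAY ha, by rw [hab']; congr 1; ring_nf⟩
    · exact hAnot (i - k) (by omega) a ha
        ⟨b, hAY hb, by rw [hba]; congr 1; ring_nf⟩
  -- μ A ≤ μ W
  have hfinal : μ A ≤ μ W := by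
    have hU : μ A ≤ μ (⋃ i : ℤ, A ∩ (S ^ i : Equiv.Perm X) '' W) := by
      calc μ A ≤ μ ((⋃ i : ℤ, A ∩ (S ^ i : Equiv.Perm X) '' W)
            ∪ (⋃ i : ℤ, (S ^ i : Equiv.Perm X) '' W)ᶜ) := by
            refine measure_mono ?_
            intro x hx
            by_cases hxU : x ∈ ⋃ i : ℤ, (S ^ i : Equiv.Perm X) '' W
            · rcases Set.mem_iUnion.1 hxU with ⟨i, hi⟩
              exact Or.inl (Set.mem_iUnion.2 ⟨i, hx, hi⟩)
            · exact Or.inr hxU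
        _ ≤ μ (⋃ i : ℤ, A ∩ (S ^ i : Equiv.Perm X) '' W)
            + μ ((⋃ i : ℤ, (S ^ i : Equiv.Perm X) '' W)ᶜ) := measure_union_le _ _
        _ = μ (⋃ i : ℤ, A ∩ (S ^ i : Equiv.Perm X) '' W) := by rw [hcover, add_zero]
    have hterm : ∀ i : ℤ, μ (A ∩ (S ^ i : Equiv.Perm X) '' W)
        = μ ((S ^ (-i) : Equiv.Perm X) '' A ∩ W) := by
      intro i
      rw [← himg (-i) (A ∩ (S ^ i : Equiv.Perm X) '' W)
        (hAmeas.inter (hms _ _ hW))]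
      congr 1
      rw [Set.image_inter (Equiv.injective _), hcomp]
      simp
    calc μ A ≤ μ (⋃ i : ℤ, A ∩ (S ^ i : Equiv.Perm X) '' W) := hU
      _ ≤ ∑' i : ℤ, μ (A ∩ (S ^ i : Equiv.Perm X) '' W) := measure_iUnion_le _
      _ = ∑' i : ℤ, μ ((S ^ (-i) : Equiv.Perm X) '' A ∩ W) := tsum_congr hterm
      _ = μ (⋃ i : ℤ, (S ^ (-i) : Equiv.Perm X) '' A ∩ W) := by
          refine (measure_iUnion ?_ (fun i => (hms _ _ hAmeas).inter hW)).symm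
          intro i k hik
          exact Disjoint.mono Set.inter_subset_left Set.inter_subset_left
            (hAw (-i) (-k) (by omega))
      _ ≤ μ W := measure_mono (Set.iUnion_subset fun i => Set.inter_subset_right)
  exact hfinal
end

section
/- Let μ be a finite measure on the unit circle 𝕋 that is absolutely continuous with respect to Lebesgue measure λ and nonzero. For p ≥ 1 let μ_p be the pushforward of μ under the map z ↦ z^p. Then λ({z : dμ_p/dλ (z) > 0}) → λ(𝕋) as p → ∞; consequently, for all sufficiently large p, μ_p is not mutually singular with μ. -/
open Filter Topology MeasureTheory
open scoped ENNReal NNReal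

open Set Metric in
/-- If `ν ≪ volume` and `ν A = 0`, then the positivity set of `dν/dλ` meets `A` in a null set. -/
lemma aux_null_inter_pos {ν : Measure UnitAddCircle} [IsFiniteMeasure ν] (hν : ν ≪ volume) {A : Set UnitAddCircle}
    (hA : MeasurableSet A) (h0 : ν A = 0) :
    volume ({z | 0 < ν.rnDeriv volume z} ∩ A) = 0 := by
  have hfm : Measurable (ν.rnDeriv volume) := ν.measurable_rnDeriv volume
  have hmeq : volume.withDensity (ν.rnDeriv volume) = ν :=
    Measure.withDensity_rnDeriv_eq ν volume hν
  have h1 : ∫⁻ z in A, ν.rnDeriv volume z ∂volume = 0 := by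
    rw [← withDensity_apply _ hA, hmeq]; exact h0
  have h2 : ν.rnDeriv volume =ᵐ[volume.restrict A] 0 :=
    (lintegral_eq_zero_iff hfm).mp h1
  have h3 : volume.restrict A {z | ν.rnDeriv volume z ≠ 0} = 0 := by
    exact ae_iff.mp h2
  have h4 : volume ({z | 0 < ν.rnDeriv volume z} ∩ A)
      = volume.restrict A {z | 0 < ν.rnDeriv volume z} :=
    (Measure.restrict_apply (measurableSet_lt measurable_const hfm)).symm
  rw [h4]
  exact measure_mono_null (fun z hz => hz.ne') h3

open Set Metric Pointwise

theorem stmt_16 (μ : Measure UnitAddCircle) [IsFiniteMeasure μ]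
    (hac : μ ≪ volume) (hne : μ ≠ 0) :
    Tendsto (fun p : ℕ =>
        volume {z : UnitAddCircle | 0 < (μ.map (fun x => p • x)).rnDeriv volume z})
      atTop (𝓝 (volume (Set.univ : Set UnitAddCircle))) ∧
    ∀ᶠ p : ℕ in atTop, ¬ (μ.map (fun x => p • x)).MutuallySingular μ := by
  have hfm : Measurable (μ.rnDeriv volume) := μ.measurable_rnDeriv volume
  set E : Set UnitAddCircle := {z | 0 < μ.rnDeriv volume z} with hE
  have hEm : MeasurableSet E := measurableSet_lt measurable_const hfm
  -- `E` has positive measure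
  have hE0 : volume E ≠ 0 := by
    intro h0
    refine hne ?_
    have hsub : {z | μ.rnDeriv volume z ≠ 0} ⊆ E := fun z hz => pos_iff_ne_zero.mpr hz
    have hf0 : μ.rnDeriv volume =ᵐ[volume] 0 := by
      refine (ae_iff).mpr ?_
      simpa using measure_mono_null hsub h0
    calc μ = volume.withDensity (μ.rnDeriv volume) :=
            (Measure.withDensity_rnDeriv_eq μ volume hac).symm
      _ = volume.withDensity 0 := withDensity_congr_ae hf0
      _ = 0 := withDensity_zero
  -- measure preservation of `p • ·`
  have hmp : ∀ p : ℕ, 1 ≤ p →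
      MeasurePreserving (fun x : UnitAddCircle => p • x) volume volume := by
    intro p hp
    have hpz : ((p : ℤ)) ≠ 0 := by exact_mod_cast (Nat.one_le_iff_ne_zero.mp hp)
    have h := MeasureTheory.Measure.measurePreserving_zsmul
      (volume : Measure UnitAddCircle) hpz
    simpa only [natCast_zsmul] using h
  -- absolute continuity of the pushforwards
  have hacp : ∀ p : ℕ, 1 ≤ p → μ.map (fun x => p • x) ≪ (volume : Measure UnitAddCircle) := by
    intro p hp
    refine Measure.AbsolutelyContinuous.mk fun A hA hA0 => ?_
    rw [Measure.map_apply (hmp p hp).measurable hA]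
    refine hac ?_
    rw [(hmp p hp).measure_preimage hA.nullMeasurableSet]
    exact hA0
  -- density point
  obtain ⟨d, -, hd⟩ : ∃ d, d ∈ E ∧ ∀ {ι'} {l : Filter ι'} (w : ι' → UnitAddCircle) (δ : ι' → ℝ),
      Tendsto δ l (𝓝[>] 0) → (∀ᶠ j in l, d ∈ closedBall (w j) (1 * δ j)) →
      Tendsto (fun j => volume (E ∩ closedBall (w j) (δ j)) / volume (closedBall (w j) (δ j)))
        l (𝓝 1) :=
    MeasureTheory.Measure.exists_mem_of_measure_ne_zero_of_ae hE0
      (IsUnifLocDoublingMeasure.ae_tendsto_measure_inter_div volume E 1)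
  -- the ratio tends to 1
  have hδ : Tendsto (fun p : ℕ => 1 / (2 * (p : ℝ))) atTop (𝓝[>] 0) := by
    have h2p : Tendsto (fun p : ℕ => 2 * (p : ℝ)) atTop atTop :=
      (tendsto_natCast_atTop_atTop).const_mul_atTop two_pos
    have h0 := h2p.inv_tendsto_atTop
    have heq : (fun p : ℕ => 1 / (2 * (p : ℝ))) = (fun p : ℕ => 2 * (p : ℝ))⁻¹ := by
      funext q; simp [one_div]
    refine tendsto_nhdsWithin_iff.mpr ⟨by rw [heq]; exact h0, ?_⟩
    filter_upwards [eventually_ge_atTop 1] with p hp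
    have hp0 : (0 : ℝ) < p := by exact_mod_cast hp
    exact Set.mem_Ioi.mpr (div_pos one_pos (mul_pos two_pos hp0))
  have hρ : Tendsto (fun p : ℕ =>
      volume (E ∩ closedBall d (1 / (2 * (p : ℝ)))) / volume (closedBall d (1 / (2 * (p : ℝ)))))
      atTop (𝓝 1) := by
    refine hd (ι' := ℕ) (l := atTop) (fun _ => d) (fun p : ℕ => 1 / (2 * (p : ℝ))) hδ ?_
    filter_upwards [eventually_ge_atTop 1] with p hp
    have hp0 : (0 : ℝ) < p := by exact_mod_cast hp
    simp only [mem_closedBall, dist_self, one_mul]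
    positivity
  -- the key inequality
  have key : ∀ p : ℕ, 1 ≤ p →
      volume (E ∩ closedBall d (1 / (2 * (p : ℝ)))) / volume (closedBall d (1 / (2 * (p : ℝ))))
        ≤ volume {z : UnitAddCircle | 0 < (μ.map (fun x => p • x)).rnDeriv volume z} := by
    intro p hp
    have hp0 : (0 : ℝ) < p := by exact_mod_cast hp
    have hgm : Measurable ((μ.map (fun x : UnitAddCircle => p • x)).rnDeriv volume) :=
      Measure.measurable_rnDeriv _ _
    have hsm : MeasurableSet
        {z : UnitAddCircle | 0 < (μ.map (fun x => p • x)).rnDeriv volume z} :=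
      measurableSet_lt measurable_const hgm
    -- a point of additive order `p`
    set u : UnitAddCircle := ((((1 : ℕ) : ℝ) / ((p : ℕ) : ℝ) * (1 : ℝ) : ℝ) : UnitAddCircle)
      with hu_def
    have hord : addOrderOf u = p :=
      AddCircle.addOrderOf_div_of_gcd_eq_one (Nat.lt_of_lt_of_le Nat.zero_lt_one hp)
        (Nat.gcd_one_left p)
    have hpu : p • u = 0 := by rw [← hord]; exact addOrderOf_nsmul_eq_zero u
    have hufin : IsOfFinAddOrder u := by
      rw [← addOrderOf_pos_iff, hord]; omega
    -- the invariant good set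
    set D : Set UnitAddCircle :=
      (fun x : UnitAddCircle => p • x) ⁻¹'
        {z : UnitAddCircle | 0 < (μ.map (fun x => p • x)).rnDeriv volume z} with hD
    have hDm : MeasurableSet D := hsm.preimage (hmp p hp).measurable
    have hDinv : u +ᵥ D = D := by
      ext z
      have h1 : p • (-u + z) = p • z := by
        rw [smul_add, smul_neg, hpu, neg_zero, zero_add]
      rw [hD]
      simp only [Set.mem_vadd_set_iff_neg_vadd_mem, vadd_eq_add, Set.mem_preimage, h1]
    -- `μ` lives on `D`
    have hνbad : (μ.map (fun x : UnitAddCircle => p • x))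
        {z : UnitAddCircle | 0 < (μ.map (fun x => p • x)).rnDeriv volume z}ᶜ = 0 := by
      have h := Measure.rnDeriv_pos (hacp p hp)
      rw [ae_iff] at h
      simpa [Set.compl_setOf] using h
    have hμDc : μ Dᶜ = 0 := by
      have hDc : Dᶜ = (fun x : UnitAddCircle => p • x) ⁻¹'
          {z : UnitAddCircle | 0 < (μ.map (fun x => p • x)).rnDeriv volume z}ᶜ := by
        rw [hD, Set.preimage_compl]
      rw [hDc, ← Measure.map_apply (hmp p hp).measurable hsm.compl]
      exact hνbad
    have hED : volume (E ∩ Dᶜ) = 0 := aux_null_inter_pos hac hDm.compl hμDc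
    -- fundamental domain computation
    have hI : closedBall d (1 / (2 * (p : ℝ)))
        =ᵐ[volume] ball d ((1 : ℝ) / (2 * (addOrderOf u : ℝ))) := by
      rw [hord]; exact AddCircle.closedBall_ae_eq_ball
    have hfd : volume D = addOrderOf u • volume (D ∩ closedBall d (1 / (2 * (p : ℝ)))) :=
      AddCircle.volume_of_add_preimage_eq D _ u d hufin (Filter.EventuallyEq.of_eq hDinv) hI
    rw [hord, nsmul_eq_mul] at hfd
    have hDvol : volume D
        = volume {z : UnitAddCircle | 0 < (μ.map (fun x => p • x)).rnDeriv volume z} :=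
      (hmp p hp).measure_preimage hsm.nullMeasurableSet
    -- `E ∩ I` is a.e. contained in `D ∩ I`
    have hEI : volume (E ∩ closedBall d (1 / (2 * (p : ℝ))))
        ≤ volume (D ∩ closedBall d (1 / (2 * (p : ℝ)))) := by
      calc volume (E ∩ closedBall d (1 / (2 * (p : ℝ))))
          ≤ volume ((D ∩ closedBall d (1 / (2 * (p : ℝ)))) ∪ (E ∩ Dᶜ)) := by
            refine measure_mono fun z hz => ?_
            by_cases hzD : z ∈ D
            · exact Or.inl ⟨hzD, hz.2⟩
            · exact Or.inr ⟨hz.1, hzD⟩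
        _ ≤ volume (D ∩ closedBall d (1 / (2 * (p : ℝ)))) + volume (E ∩ Dᶜ) :=
            measure_union_le _ _
        _ = volume (D ∩ closedBall d (1 / (2 * (p : ℝ)))) := by rw [hED, add_zero]
    -- volume of the ball
    have hIvol : volume (closedBall d (1 / (2 * (p : ℝ)))) = ((p : ℝ≥0∞))⁻¹ := by
      rw [AddCircle.volume_closedBall]
      have h2 : 2 * (1 / (2 * (p : ℝ))) = 1 / (p : ℝ) := by
        field_simp
      rw [h2, min_eq_right (by rw [div_le_one hp0]; exact_mod_cast hp), one_div,
        ENNReal.ofReal_inv_of_pos hp0, ENNReal.ofReal_natCast]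
    have hq : volume (E ∩ closedBall d (1 / (2 * (p : ℝ))))
          / volume (closedBall d (1 / (2 * (p : ℝ))))
        = (p : ℝ≥0∞) * volume (E ∩ closedBall d (1 / (2 * (p : ℝ)))) := by
      rw [hIvol, div_eq_mul_inv, inv_inv, mul_comm]
    calc volume (E ∩ closedBall d (1 / (2 * (p : ℝ))))
          / volume (closedBall d (1 / (2 * (p : ℝ))))
        = (p : ℝ≥0∞) * volume (E ∩ closedBall d (1 / (2 * (p : ℝ)))) := hq
      _ ≤ (p : ℝ≥0∞) * volume (D ∩ closedBall d (1 / (2 * (p : ℝ)))) :=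
          by gcongr
      _ = volume D := hfd.symm
      _ = volume {z : UnitAddCircle | 0 < (μ.map (fun x => p • x)).rnDeriv volume z} := hDvol
  -- total measure is 1
  have huniv : (volume : Measure UnitAddCircle) Set.univ = 1 := by
    simp [AddCircle.measure_univ]
  -- the first conclusion
  have h1 : Tendsto (fun p : ℕ =>
      volume {z : UnitAddCircle | 0 < (μ.map (fun x => p • x)).rnDeriv volume z})
      atTop (𝓝 (volume (Set.univ : Set UnitAddCircle))) := by
    rw [huniv]
    refine tendsto_of_tendsto_of_tendsto_of_le_of_le' hρ tendsto_const_nhds ?_ ?_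
    · filter_upwards [eventually_ge_atTop 1] with p hp using key p hp
    · filter_upwards with p using le_of_le_of_eq (measure_mono (Set.subset_univ _)) huniv
  refine ⟨h1, ?_⟩
  -- second conclusion
  have hlt : volume (Set.univ : Set UnitAddCircle) - volume E
      < volume (Set.univ : Set UnitAddCircle) := by
    refine ENNReal.sub_lt_self (measure_ne_top _ _) ?_ hE0
    rw [huniv]; exact one_ne_zero
  have hev1 : ∀ᶠ p : ℕ in atTop,
      volume (Set.univ : Set UnitAddCircle) - volume E
        < volume {z : UnitAddCircle | 0 < (μ.map (fun x => p • x)).rnDeriv volume z} :=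
    h1.eventually (eventually_gt_nhds hlt)
  filter_upwards [hev1, eventually_ge_atTop 1] with p hgt hp hsing
  obtain ⟨S, hSm, hS1, hS2⟩ := hsing
  have hg : volume ({z : UnitAddCircle
      | 0 < (μ.map (fun x => p • x)).rnDeriv volume z} ∩ S) = 0 :=
    aux_null_inter_pos (hacp p hp) hSm hS1
  have hE2 : volume (E ∩ Sᶜ) = 0 := aux_null_inter_pos hac hSm.compl hS2
  have hb1 : volume {z : UnitAddCircle | 0 < (μ.map (fun x => p • x)).rnDeriv volume z}
      ≤ volume Sᶜ := by
    calc volume {z : UnitAddCircle | 0 < (μ.map (fun x => p • x)).rnDeriv volume z}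
        ≤ volume ({z : UnitAddCircle | 0 < (μ.map (fun x => p • x)).rnDeriv volume z} ∩ S)
          + volume ({z : UnitAddCircle | 0 < (μ.map (fun x => p • x)).rnDeriv volume z} \ S) :=
          measure_le_inter_add_diff _ _ _
      _ = volume ({z : UnitAddCircle | 0 < (μ.map (fun x => p • x)).rnDeriv volume z} \ S) := by
          rw [hg, zero_add]
      _ ≤ volume Sᶜ := measure_mono fun z hz => hz.2
  have hb2 : volume E ≤ volume S := by
    calc volume E ≤ volume (E ∩ Sᶜ) + volume (E \ Sᶜ) := measure_le_inter_add_diff _ _ _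
      _ = volume (E \ Sᶜ) := by rw [hE2, zero_add]
      _ ≤ volume S := measure_mono fun z hz => by simpa using hz.2
  have hsum : volume {z : UnitAddCircle | 0 < (μ.map (fun x => p • x)).rnDeriv volume z}
      + volume E ≤ volume (Set.univ : Set UnitAddCircle) := by
    calc volume {z : UnitAddCircle | 0 < (μ.map (fun x => p • x)).rnDeriv volume z} + volume E
        ≤ volume Sᶜ + volume S := add_le_add hb1 hb2
      _ = volume (Set.univ : Set UnitAddCircle) := by
          rw [add_comm, measure_add_measure_compl hSm]
  exact absurd hgt (not_lt.mpr (ENNReal.le_sub_of_add_le_right (measure_ne_top _ _) hsum))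
end
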